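/- (Minimum achievable outage probability, eq. (19).) Let P_{S1}, P_{S2}, δ₁, δ₂ > 0 satisfy the balanced-rate condition P_{S1}/δ₁ = P_{S2}/δ₂. Then, as ρ → ∞, the non-outage probability ℙ((X,Y) ∈ M(ρ)) tends to e^{−(δ₁/P_{S1})(1/Ω_X + 1/Ω_Y)}; equivalently, the outage probability P_out(ρ) = 1 − ℙ((X,Y) ∈ M(ρ)) tends to P_out^min = 1 − e^{−(δ₁/P_{S1})(1/Ω_X + 1/Ω_Y)}. -/

import Mathlib

open MeasureTheory ProbabilityTheory Filter Topology

lemma expMeasure_Ioi {r a : ℝ} (hr : 0 < r) (ha : 0 ≤ a) :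
    expMeasure r (Set.Ioi a) = ENNReal.ofReal (Real.exp (-(r * a))) := by
  haveI := isProbabilityMeasure_expMeasure hr
  have hcdf : (cdf (expMeasure r)) a = 1 - Real.exp (-(r * a)) := by
    rw [cdf_expMeasure_eq hr, if_pos ha]
  have hIic : expMeasure r (Set.Iic a) = ENNReal.ofReal (1 - Real.exp (-(r * a))) := by
    rw [← ofReal_cdf, hcdf]
  have hle : Real.exp (-(r * a)) ≤ 1 := by
    rw [Real.exp_le_one_iff]
    nlinarith
  have : Set.Ioi a = (Set.Iic a)ᶜ := (Set.compl_Iic).symm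
  rw [this, measure_compl measurableSet_Iic (measure_ne_top _ _), hIic, measure_univ]
  rw [show (1 : ENNReal) = ENNReal.ofReal 1 by simp,
    ← ENNReal.ofReal_sub _ (by linarith [Real.exp_pos (-(r * a))])]
  congr 1
  ring

/-- Minimum achievable outage probability (eq. (19)): as `ρ → ∞`, the non-outage
probability `ℙ((X,Y) ∈ M(ρ))` tends to `e^{−(δ₁/P_{S1})(1/Ω_X + 1/Ω_Y)}`;
equivalently the outage probability tends to
`P_out^min = 1 − e^{−(δ₁/P_{S1})(1/Ω_X + 1/Ω_Y)}`. -/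
theorem minimum_outage_probability
    {Ω : Type*} [MeasurableSpace Ω] (μ : Measure Ω) [IsProbabilityMeasure μ]
    (X Y : Ω → ℝ) (hXm : Measurable X) (hYm : Measurable Y)
    (ΩX ΩY : ℝ) (hΩX : 0 < ΩX) (hΩY : 0 < ΩY)
    (hX : Measure.map X μ = expMeasure (1 / ΩX))
    (hY : Measure.map Y μ = expMeasure (1 / ΩY))
    (hindep : IndepFun X Y μ)
    (PS1 PS2 δ1 δ2 : ℝ)
    (hPS1 : 0 < PS1) (hPS2 : 0 < PS2) (hδ1 : 0 < δ1) (hδ2 : 0 < δ2)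
    (hbal : PS1 / δ1 = PS2 / δ2)
    (M : ℝ → Set (ℝ × ℝ))
    (hM : ∀ ρ, M ρ = {p : ℝ × ℝ | 0 < p.1 ∧ 0 < p.2 ∧ PS1 * p.1 > δ1 ∧ PS2 * p.2 > δ2 ∧
        max (δ1 * (1 + PS1 * p.1 + PS2 * p.2) / (p.2 * (PS1 * p.1 - δ1)))
            (δ2 * (1 + PS1 * p.1 + PS2 * p.2) / (p.1 * (PS2 * p.2 - δ2))) ≤ ρ}) :
    Tendsto (fun ρ : ℝ => (μ {ω | (X ω, Y ω) ∈ M ρ}).toReal) atTop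
        (𝓝 (Real.exp (-(δ1 / PS1) * (1 / ΩX + 1 / ΩY)))) ∧
    Tendsto (fun ρ : ℝ => 1 - (μ {ω | (X ω, Y ω) ∈ M ρ}).toReal) atTop
        (𝓝 (1 - Real.exp (-(δ1 / PS1) * (1 / ΩX + 1 / ΩY)))) := by
  set a : ℝ := δ1 / PS1 with ha_def
  have ha : 0 < a := div_pos hδ1 hPS1
  have hbal' : δ2 / PS2 = a := by
    rw [div_eq_div_iff hδ1.ne' hδ2.ne'] at hbal
    rw [ha_def, div_eq_div_iff hPS2.ne' hPS1.ne']
    nlinarith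
  set E : ℝ → Set Ω := fun ρ => {ω | (X ω, Y ω) ∈ M ρ} with hE_def
  set T : Set Ω := X ⁻¹' Set.Ioi a ∩ Y ⁻¹' Set.Ioi a with hT_def
  have hmono : Monotone E := by
    intro ρ ρ' hρ ω hω
    simp only [hE_def, Set.mem_setOf_eq, hM] at hω ⊢
    exact ⟨hω.1, hω.2.1, hω.2.2.1, hω.2.2.2.1, hω.2.2.2.2.trans hρ⟩
  have hUnion : ⋃ ρ : ℝ, E ρ = T := by
    ext ω
    simp only [Set.mem_iUnion, hE_def, Set.mem_setOf_eq, hM, hT_def, Set.mem_inter_iff,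
      Set.mem_preimage, Set.mem_Ioi]
    constructor
    · rintro ⟨ρ, _, _, h1, h2, _⟩
      constructor
      · rw [ha_def, div_lt_iff₀ hPS1]; linarith [h1]
      · rw [← hbal', div_lt_iff₀ hPS2]; linarith [h2]
    · rintro ⟨hx, hy⟩
      have hx0 : 0 < X ω := ha.trans hx
      have hy0 : 0 < Y ω := ha.trans hy
      have h1 : PS1 * X ω > δ1 := by
        rw [ha_def, div_lt_iff₀ hPS1] at hx; linarith
      have h2 : PS2 * Y ω > δ2 := by
        rw [← hbal', div_lt_iff₀ hPS2] at hy; linarith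
      obtain ⟨n, hn⟩ := exists_nat_ge
        (max (δ1 * (1 + PS1 * X ω + PS2 * Y ω) / (Y ω * (PS1 * X ω - δ1)))
          (δ2 * (1 + PS1 * X ω + PS2 * Y ω) / (X ω * (PS2 * Y ω - δ2))))
      exact ⟨(n : ℝ), hx0, hy0, h1, h2, hn⟩
  have htend : Tendsto (fun ρ => μ (E ρ)) atTop (𝓝 (μ T)) := by
    have := tendsto_measure_iUnion_atTop (μ := μ) hmono
    rwa [hUnion] at this
  have hTX : μ (X ⁻¹' Set.Ioi a) = ENNReal.ofReal (Real.exp (-(a / ΩX))) := by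
    rw [← Measure.map_apply hXm measurableSet_Ioi, hX, expMeasure_Ioi (by positivity) ha.le]
    congr 2
    field_simp
  have hTY : μ (Y ⁻¹' Set.Ioi a) = ENNReal.ofReal (Real.exp (-(a / ΩY))) := by
    rw [← Measure.map_apply hYm measurableSet_Ioi, hY, expMeasure_Ioi (by positivity) ha.le]
    congr 2
    field_simp
  have hT : (μ T).toReal = Real.exp (-(δ1 / PS1) * (1 / ΩX + 1 / ΩY)) := by
    rw [hT_def, hindep.measure_inter_preimage_eq_mul _ _ measurableSet_Ioi measurableSet_Ioi,
      hTX, hTY, ENNReal.toReal_mul, ENNReal.toReal_ofReal (Real.exp_pos _).le,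
      ENNReal.toReal_ofReal (Real.exp_pos _).le, ← Real.exp_add]
    congr 1
    rw [ha_def]
    field_simp
    ring
  have h1 : Tendsto (fun ρ : ℝ => (μ (E ρ)).toReal) atTop
      (𝓝 (Real.exp (-(δ1 / PS1) * (1 / ΩX + 1 / ΩY)))) := by
    rw [← hT]
    exact (ENNReal.tendsto_toReal (measure_ne_top μ T)).comp htend
  exact ⟨h1, tendsto_const_nhds.sub h1⟩
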